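/- Let O be a split octonion algebra and a ∈ O a nonzero element with N(a) = 0 and tr(a) = 0 (equivalently a² = 0 ≠ a). Then aO = {x ∈ O : ax = 0} and (aO)(aO) ⊆ aO; that is, aO is a 4-dimensional subalgebra of O. -/

import Mathlib

open QuadraticMap in
/-- In a split octonion algebra, if `a ≠ 0` with `N(a) = 0` and
`tr(a) = 0` (equivalently `a² = 0 ≠ a`), then `aO = {x : ax = 0}`, `aO` is closed under
multiplication, and it has dimension 4. -/
theorem stmt_11 (F : Type*) [Field F] (O : Type*) [NonAssocRing O] [Module F O]
    [SMulCommClass F O O] [IsScalarTower F O O]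
    (q : QuadraticForm F O)
    (hmul : ∀ x y : O, q (x * y) = q x * q y)
    (hnd : ∀ x : O, (∀ y : O, QuadraticMap.polar (⇑q) x y = 0) → x = 0)
    (hdim : Module.finrank F O = 8)
    (hsplit : ∃ x : O, x ≠ 0 ∧ q x = 0)
    (a : O) (ha0 : a ≠ 0) (haN : q a = 0) (haT : QuadraticMap.polar (⇑q) a 1 = 0) :
    (Set.range (fun x : O => a * x) = {x : O | a * x = 0}) ∧
    (∀ u ∈ LinearMap.range (LinearMap.mulLeft F a),
      ∀ v ∈ LinearMap.range (LinearMap.mulLeft F a),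
        u * v ∈ LinearMap.range (LinearMap.mulLeft F a)) ∧
    Module.finrank F (LinearMap.range (LinearMap.mulLeft F a)) = 4 := by
  -- identity (1): B(xy, xz) = q x * B(y,z)
  have B1 : ∀ x y z : O, polar (⇑q) (x*y) (x*z) = q x * polar (⇑q) y z := by
    intro x y z
    simp only [QuadraticMap.polar, ← mul_add, hmul]
    ring
  -- identity (3): B(xy, uz) + B(uy, xz) = B(x,u) * B(y,z)
  have B3 : ∀ x u y z : O,
      polar (⇑q) (x*y) (u*z) + polar (⇑q) (u*y) (x*z)
        = polar (⇑q) x u * polar (⇑q) y z := by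
    intro x u y z
    have h := B1 (x+u) y z
    have hq : q (x+u) = q x + q u + polar (⇑q) x u := by
      simp only [QuadraticMap.polar]; ring
    rw [add_mul, add_mul, q.polar_add_left, q.polar_add_right, q.polar_add_right, hq] at h
    linear_combination h - B1 x y z - B1 u y z
  -- moving a factor across the form, via conjugation
  have Bmov : ∀ x y w : O,
      polar (⇑q) (x*y) w = polar (⇑q) x 1 * polar (⇑q) y w - polar (⇑q) y (x*w) := by
    intro x y w
    have h := B3 x 1 y w
    rw [one_mul, one_mul] at h
    linear_combination h
  -- conjugation
  set K : O → O := fun x => polar (⇑q) x 1 • (1:O) - x with hKdef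
  have hKmul : ∀ x z : O, K x * z = polar (⇑q) x 1 • z - x * z := by
    intro x z
    simp [hKdef, sub_mul, smul_mul_assoc]
  have hpol11 : polar (⇑q) (1:O) (1:O) = 2 * q 1 := by
    have := q.polar_self (1:O); simpa [two_smul, two_mul] using this
  have hq1 : q 1 = 1 := by
    have h := hmul 1 1
    rw [one_mul] at h
    have h0 : q 1 * (q 1 - 1) = 0 := by linear_combination -h
    rcases mul_eq_zero.mp h0 with h0 | h1
    · exfalso
      apply ha0
      apply hnd
      intro y
      have hy : ∀ z : O, q z = 0 := by
        intro z
        have := hmul 1 z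
        rw [one_mul, h0, zero_mul] at this
        exact this
      simp [QuadraticMap.polar, hy]
    · linear_combination h1
  have hK1 : ∀ x : O, polar (⇑q) (K x) 1 = polar (⇑q) x 1 := by
    intro x
    simp only [hKdef]
    rw [q.polar_sub_left, q.polar_smul_left, hpol11, hq1, smul_eq_mul]
    ring
  have hKK : ∀ x : O, K (K x) = x := by
    intro x
    simp only [hKdef]
    rw [show polar (⇑q) (polar (⇑q) x 1 • (1:O) - x) 1 = polar (⇑q) x 1 from hK1 x]
    abel
  -- B(xy, w) = B(y, K x * w)
  have Bassoc : ∀ x y w : O,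
      polar (⇑q) (x*y) w = polar (⇑q) y (K x * w) := by
    intro x y w
    rw [hKmul, q.polar_sub_right, q.polar_smul_right, Bmov]
    simp [smul_eq_mul]
  -- key: K x * (x * y) = q x • y
  have hmain : ∀ x y : O, K x * (x * y) = q x • y := by
    intro x y
    have hz : ∀ z : O, polar (⇑q) (K x * (x * y) - q x • y) z = 0 := by
      intro z
      rw [q.polar_sub_left, q.polar_smul_left]
      have h1 : polar (⇑q) (K x * (x*y)) z = polar (⇑q) (x*y) (x*z) := by
        have := Bassoc (K x) (x*y) z
        rw [hKK] at this
        rw [QuadraticMap.polar_comm (⇑q) (K x * (x*y)) z, ← Bassoc, QuadraticMap.polar_comm (⇑q)]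
      rw [h1, B1]
      simp [smul_eq_mul]
    have := hnd _ hz
    rwa [sub_eq_zero] at this
  -- Cayley-Hamilton: x*x = B(x,1) • x - q x • 1
  have hCay : ∀ x : O, x * x = polar (⇑q) x 1 • x - q x • (1:O) := by
    intro x
    have h := hmain x 1
    rw [mul_one, hKmul] at h
    rw [← h]; abel
  -- left alternative law
  have hAlt : ∀ x y : O, x * (x * y) = (x * x) * y := by
    intro x y
    have h := hmain x y
    rw [hKmul] at h
    have h2 : x * (x*y) = polar (⇑q) x 1 • (x*y) - q x • y := by
      rw [← h]; abel
    rw [h2, hCay, sub_mul, smul_mul_assoc, smul_mul_assoc, one_mul]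
  -- linearized left alternative law
  have hAltLin : ∀ x u y : O, x * (u * y) + u * (x * y) = (x * u + u * x) * y := by
    intro x u y
    have h := hAlt (x + u) y
    have hexp : x*u + u*x = (x+u)*(x+u) - x*x - u*u := by
      simp only [mul_add, add_mul]; abel
    rw [hexp, sub_mul, sub_mul, ← hAlt x y, ← hAlt u y, ← h]
    simp only [mul_add, add_mul]
    abel
  -- linearized Cayley: x*u + u*x = B(x,1) • u + B(u,1) • x - B(x,u) • 1
  have hCayLin : ∀ x u : O, x * u + u * x
      = polar (⇑q) x 1 • u + polar (⇑q) u 1 • x - polar (⇑q) x u • (1:O) := by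
    intro x u
    have h := hCay (x + u)
    have hq : q (x+u) = q x + q u + polar (⇑q) x u := by
      simp only [QuadraticMap.polar]; ring
    rw [mul_add, add_mul, add_mul, q.polar_add_left, hq, hCay x, hCay u] at h
    have : x*u + u*x = (polar (⇑q) x 1 + polar (⇑q) u 1) • (x+u)
        - (q x + q u + polar (⇑q) x u) • (1:O)
        - (polar (⇑q) x 1 • x - q x • (1:O)) - (polar (⇑q) u 1 • u - q u • (1:O)) := by
      rw [← h]; abel
    rw [this]
    simp only [add_smul, smul_add]
    abel
  -- a * a = 0 and a * (a*x) = 0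
  have haa : a * a = 0 := by rw [hCay, haT, haN]; simp
  have hann : ∀ x : O, a * (a * x) = 0 := by
    intro x
    rw [hAlt, haa, zero_mul]
  -- B(a, a*x) = 0
  have hBau : ∀ x : O, polar (⇑q) a (a * x) = 0 := by
    intro x
    have := B1 a 1 x
    rwa [mul_one, haN, zero_mul] at this
  -- find c with B(a,c) = 1
  obtain ⟨c, hc⟩ : ∃ c : O, polar (⇑q) a c = 1 := by
    by_contra hcon
    push_neg at hcon
    apply ha0
    apply hnd
    intro y
    by_contra hy
    exact (hcon ((polar (⇑q) a y)⁻¹ • y)) (by rw [q.polar_smul_right, smul_eq_mul]; field_simp)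
  -- the element d with a * (d * x) = x whenever a * x = 0
  set d : O := K c with hd
  have hda : ∀ x : O, a * x = 0 → a * (d * x) = x := by
    intro x hx
    have h1 := hAltLin a d x
    rw [hx, mul_zero, add_zero] at h1
    have hpad : polar (⇑q) a d = -1 := by
      simp only [hd, hKdef]
      rw [q.polar_sub_right, q.polar_smul_right, haT, hc]
      simp
    have h2 : a * d + d * a = polar (⇑q) d 1 • a + (1:O) := by
      rw [hCayLin a d, haT, hpad]
      simp
    rw [h1, h2, add_mul, smul_mul_assoc, hx, one_mul, smul_zero, zero_add]
  -- range = kernel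
  have hrk : LinearMap.range (LinearMap.mulLeft F a) = LinearMap.ker (LinearMap.mulLeft F a) := by
    ext u
    simp only [LinearMap.mem_range, LinearMap.mem_ker, LinearMap.mulLeft_apply]
    constructor
    · rintro ⟨x, rfl⟩; exact hann x
    · intro h; exact ⟨d * u, hda u h⟩
  refine ⟨?_, ?_, ?_⟩
  · ext u
    simp only [Set.mem_range, Set.mem_setOf_eq]
    constructor
    · rintro ⟨x, rfl⟩; exact hann x
    · intro h; exact ⟨d * u, hda u h⟩
  · rintro u ⟨x, rfl⟩ v ⟨y, rfl⟩
    simp only [LinearMap.mulLeft_apply] at *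
    rw [hrk, LinearMap.mem_ker, LinearMap.mulLeft_apply]
    have h1 := hAltLin a (a*x) (a*y)
    rw [hann y, mul_zero, add_zero] at h1
    have h2 : a * (a*x) + (a*x) * a = polar (⇑q) (a*x) 1 • a := by
      rw [hCayLin a (a*x), haT, hBau x]
      simp
    rw [h1, h2, smul_mul_assoc, hann y, smul_zero]
  · have hfd : FiniteDimensional F O := by
      apply FiniteDimensional.of_finrank_pos
      rw [hdim]; norm_num
    have h := LinearMap.finrank_range_add_finrank_ker (LinearMap.mulLeft F a)
    rw [hdim, ← hrk] at h
    omega
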